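/- For 1 ≤ s ≤ m and 1 ≤ k ≤ n, the weighted sum F_{s,k} over Up-Right lattice paths from (m,1) to (s,k) of the product of 1/(x_i+y_j) over visited cells (i,j) is a symmetric function of the variables x_s, x_{s+1}, ..., x_m. -/

import Mathlib

open Finset

noncomputable section

/-- The field of rational functions over `ℚ` in variables `x_1, x_2, …` and `y_1, y_2, …`. -/
abbrev K : Type := FractionRing (MvPolynomial (ℕ ⊕ ℕ) ℚ)

/-- The variable `x_i` as an element of `K`. -/
def X (i : ℕ) : K := algebraMap (MvPolynomial (ℕ ⊕ ℕ) ℚ) K (MvPolynomial.X (Sum.inl i))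

/-- The variable `y_j` as an element of `K`. -/
def Y (j : ℕ) : K := algebraMap (MvPolynomial (ℕ ⊕ ℕ) ℚ) K (MvPolynomial.X (Sum.inr j))

/-- A step of an Up-Right lattice path: `Up` decreases the first (row) coordinate by one,
`Right` increases the second (column) coordinate by one. -/
def Step (c d : ℕ × ℕ) : Prop :=
  (d.1 + 1 = c.1 ∧ d.2 = c.2) ∨ (d.1 = c.1 ∧ d.2 = c.2 + 1)

/-- `p` is an Up-Right lattice path from cell `A` to cell `B` (listed as its sequence of
visited cells, starting at `A` and ending at `B`). -/
def IsPath (A B : ℕ × ℕ) (p : List (ℕ × ℕ)) : Prop :=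
  p.Chain' Step ∧ p.head? = some A ∧ p.getLast? = some B

/-- All cells of `p` lie in the grid `{1,…,m} × {1,…,n}`. -/
def InGrid (m n : ℕ) (p : List (ℕ × ℕ)) : Prop :=
  ∀ c ∈ p, 1 ≤ c.1 ∧ c.1 ≤ m ∧ 1 ≤ c.2 ∧ c.2 ≤ n

/-- The weight of a path: the product of `1/(x_i + y_j)` over all visited cells `(i,j)`. -/
def pathWeight (x y : ℕ → K) (p : List (ℕ × ℕ)) : K :=
  (p.map fun c => (x c.1 + y c.2)⁻¹).prod

/-- The single-path partition function: the sum of weights of all Up-Right lattice paths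
from `A` to `B` inside the grid `{1,…,m} × {1,…,n}`. -/
def F1 (m n : ℕ) (x y : ℕ → K) (A B : ℕ × ℕ) : K :=
  ∑ᶠ p : {p : List (ℕ × ℕ) // IsPath A B p ∧ InGrid m n p}, pathWeight x y p.1

/-- `γ` is a `k`-tuple of pairwise vertex-disjoint Up-Right lattice paths `γ i : A i → B i`
inside the grid `{1,…,m} × {1,…,n}`. -/
def IsTuple (m n k : ℕ) (A B : Fin k → ℕ × ℕ) (γ : Fin k → List (ℕ × ℕ)) : Prop :=
  (∀ i, IsPath (A i) (B i) (γ i) ∧ InGrid m n (γ i)) ∧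
  (∀ i j, i ≠ j → ∀ c ∈ γ i, c ∉ γ j)

/-- The multi-path partition function: the sum, over all `k`-tuples of pairwise disjoint
Up-Right lattice paths `γ i : A i → B i` in the grid `{1,…,m} × {1,…,n}`, of the product
of `1/(x_i + y_j)` over all visited cells. -/
def Ftuple (m n k : ℕ) (x y : ℕ → K) (A B : Fin k → ℕ × ℕ) : K :=
  ∑ᶠ γ : {γ : Fin k → List (ℕ × ℕ) // IsTuple m n k A B γ}, ∏ i, pathWeight x y (γ.1 i)

/-- product of (z+y_j)⁻¹ for j in [a,b] -/
def Hrow (y : ℕ → K) (z : K) (a b : ℕ) : K := ∏ j ∈ Finset.Icc a b, (z + y j)⁻¹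

lemma Hrow_empty (y : ℕ → K) (z : K) {a b : ℕ} (h : b < a) : Hrow y z a b = 1 := by
  rw [Hrow, Finset.Icc_eq_empty (by omega), Finset.prod_empty]

lemma Hrow_succ (y : ℕ → K) (z : K) {a b : ℕ} (h : a ≤ b + 1) :
    Hrow y z a (b + 1) = (z + y (b+1))⁻¹ * Hrow y z a b := by
  rw [Hrow, Hrow, ← Finset.insert_Icc_right_eq_Icc_add_one h, Finset.prod_insert (by simp)]

lemma Hrow_single (y : ℕ → K) (z : K) (a : ℕ) : Hrow y z a a = (z + y a)⁻¹ := by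
  simp [Hrow]

lemma inv_pair (u v : K) (hu : u ≠ 0) (hv : v ≠ 0) :
    (v - u) * (v⁻¹ * u⁻¹) = u⁻¹ - v⁻¹ := by
  rw [inv_sub_inv hu hv, div_eq_mul_inv, mul_inv]; ring

lemma telescope (y : ℕ → K) (x x' : K) (hx : ∀ j, x + y j ≠ 0) (hx' : ∀ j, x' + y j ≠ 0)
    (A : ℕ) : ∀ B, (x' - x) * ∑ t ∈ Finset.Icc A B, Hrow y x' A t * Hrow y x t B
      = Hrow y x A B - Hrow y x' A B := by
  intro B
  induction B with
  | zero =>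
    rcases Nat.eq_zero_or_pos A with rfl | hA
    · simp only [Finset.Icc_self, Finset.sum_singleton, Hrow_single]
      linear_combination inv_pair (x + y 0) (x' + y 0) (hx 0) (hx' 0)
    · rw [Finset.Icc_eq_empty (by omega), Finset.sum_empty, Hrow_empty y x (by omega),
        Hrow_empty y x' (by omega)]; ring
  | succ B ih =>
    rcases lt_or_ge (B + 1) A with h | h
    · rw [Finset.Icc_eq_empty (by omega), Finset.sum_empty, Hrow_empty y x (by omega),
        Hrow_empty y x' (by omega)]; ring
    rcases eq_or_lt_of_le h with rfl | h2
    · -- A = B+1, single term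
      rw [Finset.Icc_self, Finset.sum_singleton]
      simp only [Hrow_single]
      linear_combination inv_pair (x + y (B+1)) (x' + y (B+1)) (hx (B+1)) (hx' (B+1))
    · have hAB : A ≤ B := by omega
      rw [← Finset.insert_Icc_right_eq_Icc_add_one (by omega : A ≤ B + 1), Finset.sum_insert (by simp),
        Hrow_single]
      have hsum : ∀ t ∈ Finset.Icc A B, Hrow y x' A t * Hrow y x t (B+1)
          = (x + y (B+1))⁻¹ * (Hrow y x' A t * Hrow y x t B) := by
        intro t ht
        rw [Hrow_succ y x (by simp at ht; omega)]; ring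
      rw [Finset.sum_congr rfl hsum, ← Finset.mul_sum,
        Hrow_succ y x (by omega : A ≤ B + 1), Hrow_succ y x' (by omega : A ≤ B + 1)]
      have e1 := inv_pair (x + y (B+1)) (x' + y (B+1)) (hx (B+1)) (hx' (B+1))
      linear_combination Hrow y x' A B * e1 + (x + y (B+1))⁻¹ * ih

lemma tworow (y : ℕ → K) (x x' : K) (hx : ∀ j, x + y j ≠ 0) (hx' : ∀ j, x' + y j ≠ 0)
    (hxx : x ≠ x') (A B : ℕ) :
    ∑ t ∈ Finset.Icc A B, Hrow y x' A t * Hrow y x t B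
      = ∑ t ∈ Finset.Icc A B, Hrow y x A t * Hrow y x' t B := by
  have h1 := telescope y x x' hx hx' A B
  have h2 := telescope y x' x hx' hx A B
  have hne : x' - x ≠ 0 := sub_ne_zero.2 (Ne.symm hxx)
  apply mul_left_cancel₀ hne
  rw [h1]
  have : (x' - x) * ∑ t ∈ Finset.Icc A B, Hrow y x A t * Hrow y x' t B
      = -((x - x') * ∑ t ∈ Finset.Icc A B, Hrow y x A t * Hrow y x' t B) := by ring
  rw [this, h2]; ring

/-- Recursive formula for the path sum: rows s..m, ending column k. -/
def G (x y : ℕ → K) (m s k : ℕ) : K :=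
  if h : s < m then ∑ t ∈ Finset.Icc 1 k, Hrow y (x s) t k * G x y m (s+1) t
  else Hrow y (x m) 1 k
termination_by m - s
decreasing_by omega

lemma G_lt {m s : ℕ} (x y : ℕ → K) (k : ℕ) (h : s < m) :
    G x y m s k = ∑ t ∈ Finset.Icc 1 k, Hrow y (x s) t k * G x y m (s+1) t := by
  rw [G]; simp [h]

lemma G_ge {m s : ℕ} (x y : ℕ → K) (k : ℕ) (h : ¬ s < m) :
    G x y m s k = Hrow y (x m) 1 k := by
  rw [G]; simp [h]

lemma Gcongr (x x'' y : ℕ → K) (m s k : ℕ) (hsm : s ≤ m)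
    (hagree : ∀ i, s ≤ i → i ≤ m → x i = x'' i) : G x y m s k = G x'' y m s k := by
  rcases lt_or_ge s m with h | h
  · rw [G_lt x y k h, G_lt x'' y k h]
    refine Finset.sum_congr rfl fun t _ => ?_
    rw [hagree s le_rfl (le_of_lt h), Gcongr x x'' y m (s+1) t h (fun i h1 h2 => hagree i (by omega) h2)]
  · have : s = m := le_antisymm hsm h
    rw [G_ge x y k (by omega), G_ge x'' y k (by omega), hagree m (by omega) le_rfl]
termination_by m - s
decreasing_by omega

lemma sum_exchange (k : ℕ) (f : ℕ → ℕ → K) :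
    ∑ t ∈ Finset.Icc 1 k, ∑ u ∈ Finset.Icc 1 t, f t u
      = ∑ u ∈ Finset.Icc 1 k, ∑ t ∈ Finset.Icc u k, f t u := by
  have h1 : ∀ t ∈ Finset.Icc 1 k, ∑ u ∈ Finset.Icc 1 t, f t u
      = ∑ u ∈ Finset.Icc 1 k, if u ≤ t then f t u else 0 := by
    intro t ht
    have hset : Finset.Icc 1 t = (Finset.Icc 1 k).filter (fun u => u ≤ t) := by
      ext u; simp only [Finset.mem_Icc, Finset.mem_filter]; simp at ht; omega
    rw [hset, Finset.sum_filter]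
  have h2 : ∀ u ∈ Finset.Icc 1 k, ∑ t ∈ Finset.Icc u k, f t u
      = ∑ t ∈ Finset.Icc 1 k, if u ≤ t then f t u else 0 := by
    intro u hu
    have hset : Finset.Icc u k = (Finset.Icc 1 k).filter (fun t => u ≤ t) := by
      ext t; simp only [Finset.mem_Icc, Finset.mem_filter]; simp at hu; omega
    rw [hset, Finset.sum_filter]
  rw [Finset.sum_congr rfl h1, Finset.sum_congr rfl h2, Finset.sum_comm]

lemma Gswap (x y : ℕ → K) (hxy : ∀ i j, x i + y j ≠ 0)
    (hne : ∀ i j, i ≠ j → x i ≠ x j) (m s k a : ℕ) (h1 : s ≤ a) (h2 : a < m) :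
    G (x ∘ Equiv.swap a (a+1)) y m s k = G x y m s k := by
  set x' := x ∘ Equiv.swap a (a+1) with hx'
  have hx's : ∀ i, i < a → x' i = x i := by
    intro i hi
    simp only [hx', Function.comp_apply, Equiv.swap_apply_of_ne_of_ne (by omega : i ≠ a) (by omega : i ≠ a + 1)]
  have hx'a : x' a = x (a+1) := by simp [hx', Equiv.swap_apply_left]
  have hx'a1 : x' (a+1) = x a := by simp [hx', Equiv.swap_apply_right]
  have hx'big : ∀ i, a + 1 < i → x' i = x i := by
    intro i hi
    simp only [hx', Function.comp_apply, Equiv.swap_apply_of_ne_of_ne (by omega : i ≠ a) (by omega : i ≠ a + 1)]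
  rcases lt_or_eq_of_le h1 with hlt | rfl
  · -- s < a : recurse
    have hsm : s < m := by omega
    rw [G_lt x' y k hsm, G_lt x y k hsm]
    refine Finset.sum_congr rfl fun t _ => ?_
    rw [hx's s hlt, Gswap x y hxy hne m (s+1) t a (by omega) h2]
  · -- s = a
    have hsm : s < m := h2
    rw [G_lt x' y k hsm, G_lt x y k hsm]
    rcases lt_or_ge (s+1) m with hs1 | hs1
    · -- two recursive levels
      have exp : ∀ z : ℕ → K, (∀ t, G z y m (s+2) t = G x y m (s+2) t) →
          ∑ t ∈ Finset.Icc 1 k, Hrow y (z s) t k * G z y m (s+1) t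
          = ∑ u ∈ Finset.Icc 1 k, ∑ t ∈ Finset.Icc u k,
              G x y m (s+2) u * (Hrow y (z (s+1)) u t * Hrow y (z s) t k) := by
        intro z hz
        rw [← sum_exchange k (fun t u => G x y m (s+2) u * (Hrow y (z (s+1)) u t * Hrow y (z s) t k))]
        refine Finset.sum_congr rfl fun t _ => ?_
        rw [G_lt z y t hs1, Finset.mul_sum]
        refine Finset.sum_congr rfl fun u _ => ?_
        simp only [show s+1+1 = s+2 from rfl]
        rw [hz u]; ring
      have hz' : ∀ t, G x' y m (s+2) t = G x y m (s+2) t := by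
        intro t
        exact Gcongr x' x y m (s+2) t (by omega) (fun i hi1 hi2 => hx'big i (by omega))
      rw [exp x' hz', exp x (fun t => rfl)]
      refine Finset.sum_congr rfl fun u hu => ?_
      rw [← Finset.mul_sum, ← Finset.mul_sum]
      congr 1
      rw [hx'a, hx'a1]
      exact tworow y (x (s+1)) (x s) (fun j => hxy (s+1) j) (fun j => hxy s j)
        (hne (s+1) s (by omega)) u k
    · -- s+1 = m : base case inside
      have hm : m = s + 1 := by omega
      have eL : ∀ t ∈ Finset.Icc 1 k, Hrow y (x' s) t k * G x' y m (s+1) t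
          = Hrow y (x s) 1 t * Hrow y (x (s+1)) t k := by
        intro t _
        rw [G_ge x' y t (by omega), hm, hx'a1, hx'a]; ring
      have eR : ∀ t ∈ Finset.Icc 1 k, Hrow y (x s) t k * G x y m (s+1) t
          = Hrow y (x (s+1)) 1 t * Hrow y (x s) t k := by
        intro t _
        rw [G_ge x y t (by omega), hm]; ring
      rw [Finset.sum_congr rfl eL, Finset.sum_congr rfl eR]
      exact tworow y (x (s+1)) (x s) (fun j => hxy (s+1) j) (fun j => hxy s j)
        (hne (s+1) s (by omega)) 1 k

/-- Permutations supported in `Icc s m`. -/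
def suppPerms (s m : ℕ) : Subgroup (Equiv.Perm ℕ) where
  carrier := {π | ∀ i, i ∉ Finset.Icc s m → π i = i}
  mul_mem' := by
    intro a b ha hb i hi
    simp only [Equiv.Perm.mul_apply, hb i hi, ha i hi]
  one_mem' := fun i _ => rfl
  inv_mem' := by
    intro a ha i hi
    conv_lhs => rw [← ha i hi]
    exact a.symm_apply_apply i

/-- Adjacent transpositions with both entries in `[s, m]`. -/
def adjSet (s m : ℕ) : Set (Equiv.Perm ℕ) :=
  {π | ∃ a, s ≤ a ∧ a < m ∧ π = Equiv.swap a (a+1)}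

lemma adjSet_mono {s m m' : ℕ} (h : m ≤ m') : adjSet s m ⊆ adjSet s m' := by
  rintro π ⟨a, h1, h2, rfl⟩
  exact ⟨a, h1, by omega, rfl⟩

lemma closure_le_supp (s m : ℕ) : Subgroup.closure (adjSet s m) ≤ suppPerms s m := by
  rw [Subgroup.closure_le]
  rintro π ⟨a, h1, h2, rfl⟩
  intro i hi
  simp only [Finset.mem_Icc, not_and, not_le] at hi
  exact Equiv.swap_apply_of_ne_of_ne (by omega) (by omega)

/-- Permutation sending j to M via adjacent transpositions. -/
def raise (j M : ℕ) : Equiv.Perm ℕ :=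
  if j < M then raise (j+1) M * Equiv.swap j (j+1) else 1
termination_by M - j
decreasing_by omega

lemma raise_apply (j M : ℕ) (h : j ≤ M) : raise j M j = M := by
  rw [raise]
  rcases lt_or_ge j M with hlt | hge
  · simp only [hlt, if_true, Equiv.Perm.mul_apply, Equiv.swap_apply_left]
    exact raise_apply (j+1) M hlt
  · have : j = M := by omega
    simp [this]
termination_by M - j
decreasing_by omega

lemma raise_mem_closure (s m j M : ℕ) (hs : s ≤ j) (hM : M ≤ m) :
    raise j M ∈ Subgroup.closure (adjSet s m) := by
  rw [raise]
  rcases lt_or_ge j M with hlt | hge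
  · simp only [hlt, if_true]
    exact mul_mem (raise_mem_closure s m (j+1) M (by omega) hM)
      (Subgroup.subset_closure ⟨j, hs, by omega, rfl⟩)
  · simp only [not_lt.2 hge, if_false]
    exact one_mem _
termination_by M - j
decreasing_by omega

lemma mem_closure_of_supp (s m : ℕ) (hsm : s ≤ m) (σ : Equiv.Perm ℕ)
    (hσ : ∀ i, i ∉ Finset.Icc s m → σ i = i) : σ ∈ Subgroup.closure (adjSet s m) := by
  induction m, hsm using Nat.le_induction generalizing σ with
  | base =>
    have hfix : ∀ i, σ i = i := by
      intro i
      by_cases hi : i = s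
      · subst hi
        by_contra hne
        have h1 : σ (σ i) = σ i :=
          hσ (σ i) (by simp only [Finset.Icc_self, Finset.mem_singleton]; exact hne)
        exact hne (σ.injective h1)
      · exact hσ i (by simp [hi])
    have : σ = 1 := Equiv.ext fun i => hfix i
    rw [this]; exact one_mem _
  | succ m hm IH =>
    set j := σ (m+1) with hj
    have hjmem : s ≤ j ∧ j ≤ m + 1 := by
      by_contra hc
      have hnot : j ∉ Finset.Icc s (m+1) := by simp only [Finset.mem_Icc]; omega
      have h1 : σ j = j := hσ j hnot
      have := σ.injective (h1.trans hj)
      simp only [Finset.mem_Icc, not_and, not_le] at hnot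
      omega
    set ρ := raise j (m+1) with hρ
    have hρmem : ρ ∈ Subgroup.closure (adjSet s (m+1)) :=
      raise_mem_closure s (m+1) j (m+1) hjmem.1 le_rfl
    have hτsupp : ∀ i, i ∉ Finset.Icc s m → (ρ * σ) i = i := by
      intro i hi
      by_cases him : i = m + 1
      · subst him
        simp only [Equiv.Perm.mul_apply, ← hj]
        exact raise_apply j (m+1) hjmem.2
      · have hi' : i ∉ Finset.Icc s (m+1) := by
          simp only [Finset.mem_Icc] at hi ⊢; omega
        simp only [Equiv.Perm.mul_apply, hσ i hi']
        exact closure_le_supp s (m+1) hρmem i hi'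
    have hτ : ρ * σ ∈ Subgroup.closure (adjSet s (m+1)) :=
      Subgroup.closure_mono (adjSet_mono (by omega)) (IH (ρ * σ) hτsupp)
    have : σ = ρ⁻¹ * (ρ * σ) := by group
    rw [this]
    exact mul_mem (inv_mem hρmem) hτ

lemma G_perm_inv (m s k : ℕ) (σ : Equiv.Perm ℕ) (hσ : σ ∈ Subgroup.closure (adjSet s m))
    (x y : ℕ → K) (hxy : ∀ i j, x i + y j ≠ 0) (hne : ∀ i j, i ≠ j → x i ≠ x j) :
    G (x ∘ σ) y m s k = G x y m s k := by
  induction hσ using Subgroup.closure_induction generalizing x with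
  | mem π hπ =>
    obtain ⟨a, h1, h2, rfl⟩ := hπ
    exact Gswap x y hxy hne m s k a h1 h2
  | one =>
    have : x ∘ (1 : Equiv.Perm ℕ) = x := rfl
    rw [this]
  | mul a b ha hb iha ihb =>
    have hcomp : x ∘ (a * b : Equiv.Perm ℕ) = (x ∘ a) ∘ b := rfl
    rw [hcomp, ihb (x ∘ a) (fun i j => hxy (a i) j)
      (fun i j hij => hne (a i) (a j) (fun h => hij (a.injective h))), iha x hxy hne]
  | inv a ha iha =>
    have hcomp : (x ∘ (a⁻¹ : Equiv.Perm ℕ)) ∘ a = x := by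
      funext i; simp [Function.comp]
    have := iha (x ∘ (a⁻¹ : Equiv.Perm ℕ)) (fun i j => hxy _ j)
      (fun i j hij => hne _ _ (fun h => hij ((a⁻¹).injective h)))
    rw [hcomp] at this
    rw [← this]

/-! ### Lattice path combinatorics -/

/-- Horizontal run in row `s` from column `t` to column `k`. -/
def hrun (s t k : ℕ) : List (ℕ × ℕ) := (List.range' t (k + 1 - t)).map fun j => (s, j)

lemma hrun_ne_nil {s t k : ℕ} (h : t ≤ k) : hrun s t k ≠ [] := by
  simp only [hrun, ne_eq, List.map_eq_nil_iff, List.range'_eq_nil_iff]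
  omega

lemma hrun_head? {s t k : ℕ} (h : t ≤ k) : (hrun s t k).head? = some (s, t) := by
  obtain ⟨c, hc⟩ : ∃ c, k + 1 - t = c + 1 := ⟨k - t, by omega⟩
  rw [hrun, hc, List.range'_succ, List.map_cons, List.head?_cons]

lemma hrun_getLast? {s t k : ℕ} (h : t ≤ k) : (hrun s t k).getLast? = some (s, k) := by
  obtain ⟨c, hc⟩ : ∃ c, k + 1 - t = c + 1 := ⟨k - t, by omega⟩
  have hck : t + 1 * c = k := by omega
  rw [hrun, hc, List.range'_concat, List.map_append, hck]
  simp

lemma hrun_singleton (s k : ℕ) : hrun s k k = [(s, k)] := by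
  simp [hrun, show k + 1 - k = 1 from by omega, List.range'_one]

lemma chain'_range'_step {P : ℕ → ℕ → Prop} (hP : ∀ a, P a (a+1)) :
    ∀ (c a : ℕ), List.Chain' P (List.range' a c)
  | 0, a => by exact List.isChain_nil
  | 1, a => by simp [List.range'_one]; exact List.isChain_singleton _
  | (c+2), a => by
    rw [List.range'_succ]
    refine List.isChain_cons.2 ⟨?_, chain'_range'_step hP (c+1) (a+1)⟩
    intro y hy
    rw [List.range'_succ, List.head?_cons, Option.mem_some_iff] at hy
    rw [← hy]
    exact hP a

lemma hrun_chain' (s t k : ℕ) : List.Chain' Step (hrun s t k) := by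
  rw [hrun]
  apply List.isChain_map_of_isChain (R := fun a b : ℕ => Step (s,a) (s,b))
  · exact fun a b h => h
  · exact chain'_range'_step (fun a => Or.inr ⟨rfl, rfl⟩) _ _

lemma hrun_mem {s t k : ℕ} {c : ℕ × ℕ} (hc : c ∈ hrun s t k) :
    c.1 = s ∧ t ≤ c.2 ∧ c.2 ≤ k := by
  simp only [hrun, List.mem_map, List.mem_range'_1] at hc
  obtain ⟨j, hj, rfl⟩ := hc
  exact ⟨rfl, hj.1, by omega⟩

lemma hrun_concat {s t k : ℕ} (h : t ≤ k + 1) :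
    hrun s t k ++ [(s, k+1)] = hrun s t (k+1) := by
  have h2 : k + 1 + 1 - t = (k + 1 - t) + 1 := by omega
  have h3 : t + 1 * (k + 1 - t) = k + 1 := by omega
  rw [hrun, hrun, h2, List.range'_concat, List.map_append, h3]
  rfl

lemma hrun_isPath {s t k : ℕ} (h : t ≤ k) : IsPath (s, t) (s, k) (hrun s t k) :=
  ⟨hrun_chain' s t k, hrun_head? h, hrun_getLast? h⟩

lemma rows_ge_last (p : List (ℕ × ℕ)) :
    ∀ b, p.Chain' Step → p.getLast? = some b → ∀ c ∈ p, b.1 ≤ c.1 := by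
  induction p using List.reverseRecOn with
  | nil => intro b _ hb; simp at hb
  | append_singleton l a ih =>
    intro b hchain hb c hc
    rw [List.getLast?_concat] at hb
    injection hb with hb; subst hb
    rcases List.mem_append.1 hc with hcl | hca
    · have hlne : l ≠ [] := List.ne_nil_of_mem hcl
      obtain ⟨hcl', _, hrel⟩ := List.isChain_append.1 hchain
      have hbl : l.getLast? = some (l.getLast hlne) := List.getLast?_eq_getLast hlne
      have hstep : Step (l.getLast hlne) a := hrel _ hbl a rfl
      have h1 : (l.getLast hlne).1 ≤ c.1 := ih _ hcl' hbl c hcl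
      rcases hstep with ⟨h2, _⟩ | ⟨h2, _⟩ <;> omega
    · simp at hca; subst hca; exact le_rfl

lemma path_base {m n : ℕ} (p : List (ℕ × ℕ)) :
    ∀ k, IsPath (m, 1) (m, k) p → InGrid m n p → p = hrun m 1 k := by
  induction p using List.reverseRecOn with
  | nil => intro k hp _; exact absurd hp.2.2 (by simp)
  | append_singleton l a ih =>
    intro k hp hg
    obtain ⟨hchain, hhead, hlast⟩ := hp
    rw [List.getLast?_concat] at hlast
    injection hlast with hlast; subst hlast
    rcases eq_or_ne l [] with rfl | hlne
    · simp only [List.nil_append, List.head?_cons, Option.some_inj] at hhead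
      have hk : k = 1 := by simpa using congrArg Prod.snd hhead
      subst hk
      simp [hrun_singleton]
    · obtain ⟨hcl, _, hrel⟩ := List.isChain_append.1 hchain
      have hbl : l.getLast? = some (l.getLast hlne) := List.getLast?_eq_getLast hlne
      have hstep : Step (l.getLast hlne) (m, k) := hrel _ hbl _ rfl
      have hheadl : l.head? = some (m, 1) := by
        rwa [List.head?_append_of_ne_nil l hlne] at hhead
      have hgl : InGrid m n l := fun c hc => hg c (List.mem_append_left _ hc)
      have hgrid := hgl _ (List.getLast_mem hlne)
      rcases hstep with ⟨h1, h2⟩ | ⟨h1, h2⟩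
      · have h1' : m + 1 = (l.getLast hlne).1 := h1
        omega
      · -- right step from (m, j), k = j + 1
        have h1' : m = (l.getLast hlne).1 := h1
        have h2' : k = (l.getLast hlne).2 + 1 := h2
        have hbeq : l.getLast hlne = (m, (l.getLast hlne).2) := by
          ext
          · exact h1'.symm
          · rfl
        have hpl : IsPath (m, 1) (m, (l.getLast hlne).2) l := ⟨hcl, hheadl, by rw [hbl, ← hbeq]⟩
        have hl := ih _ hpl hgl
        rw [hl, h2', hrun_concat (by omega)]

lemma path_split {m n s : ℕ} (hs : s < m) (p : List (ℕ × ℕ)) :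
    ∀ k, IsPath (m, 1) (s, k) p → InGrid m n p →
      ∃ t q, 1 ≤ t ∧ t ≤ k ∧ IsPath (m, 1) (s+1, t) q ∧ p = q ++ hrun s t k := by
  induction p using List.reverseRecOn with
  | nil => intro k hp _; exact absurd hp.2.2 (by simp)
  | append_singleton l a ih =>
    intro k hp hg
    obtain ⟨hchain, hhead, hlast⟩ := hp
    rw [List.getLast?_concat] at hlast
    injection hlast with hlast; subst hlast
    have hlne : l ≠ [] := by
      rintro rfl
      simp only [List.nil_append, List.head?_cons, Option.some_inj, Prod.mk.injEq] at hhead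
      omega
    obtain ⟨hcl, _, hrel⟩ := List.isChain_append.1 hchain
    have hbl : l.getLast? = some (l.getLast hlne) := List.getLast?_eq_getLast hlne
    have hstep : Step (l.getLast hlne) (s, k) := hrel _ hbl _ rfl
    have hheadl : l.head? = some (m, 1) := by
      rwa [List.head?_append_of_ne_nil l hlne] at hhead
    have hgl : InGrid m n l := fun c hc => hg c (List.mem_append_left _ hc)
    have hgk := hg (s, k) (List.mem_append_right _ (by simp))
    rcases hstep with ⟨h1, h2⟩ | ⟨h1, h2⟩
    · -- up step : last of l = (s+1, k)
      have h1' : s + 1 = (l.getLast hlne).1 := h1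
      have h2' : k = (l.getLast hlne).2 := h2
      have hbeq : l.getLast hlne = (s+1, k) := by
        ext
        · exact h1'.symm
        · exact h2'.symm
      refine ⟨k, l, by omega, le_rfl, ⟨hcl, hheadl, by rw [hbl, hbeq]⟩, ?_⟩
      rw [hrun_singleton]
    · -- right step : last of l = (s, j), k = j+1
      have hgb := hgl _ (List.getLast_mem hlne)
      have h1' : s = (l.getLast hlne).1 := h1
      have h2' : k = (l.getLast hlne).2 + 1 := h2
      have hbeq : l.getLast hlne = (s, (l.getLast hlne).2) := by
        ext
        · exact h1'.symm
        · rfl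
      have hpl : IsPath (m, 1) (s, (l.getLast hlne).2) l := ⟨hcl, hheadl, by rw [hbl, ← hbeq]⟩
      obtain ⟨t, q, ht1, ht2, hq, hsplit⟩ := ih _ hpl hgl
      refine ⟨t, q, ht1, by omega, hq, ?_⟩
      rw [hsplit, List.append_assoc]
      congr 1
      rw [h2', ← hrun_concat (by omega)]

lemma path_extend {m n s t k : ℕ} (hs : 1 ≤ s) (hsm : s < m) (ht : 1 ≤ t) (htk : t ≤ k)
    (hkn : k ≤ n) (q : List (ℕ × ℕ)) (hq : IsPath (m,1) (s+1,t) q) (hgq : InGrid m n q) :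
    IsPath (m,1) (s,k) (q ++ hrun s t k) ∧ InGrid m n (q ++ hrun s t k) := by
  have hqne : q ≠ [] := by
    intro h; rw [h] at hq; exact absurd hq.2.1 (by simp)
  refine ⟨⟨List.isChain_append.2 ⟨hq.1, hrun_chain' s t k, ?_⟩, ?_, ?_⟩, ?_⟩
  · intro p hp c hc
    rw [hq.2.2, Option.mem_some_iff] at hp
    rw [hrun_head? htk, Option.mem_some_iff] at hc
    subst hp; subst hc
    exact Or.inl ⟨rfl, rfl⟩
  · rw [List.head?_append_of_ne_nil q hqne]; exact hq.2.1
  · rw [List.getLast?_append_of_ne_nil q (hrun_ne_nil htk)]; exact hrun_getLast? htk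
  · intro c hc
    rcases List.mem_append.1 hc with h | h
    · exact hgq c h
    · obtain ⟨hc1, hc2, hc3⟩ := hrun_mem h
      omega

/-- Finset of paths from (m,1) to (s,k). -/
def PF (m s k : ℕ) : Finset (List (ℕ × ℕ)) :=
  if s < m then (Finset.Icc 1 k).biUnion fun t => (PF m (s+1) t).image (· ++ hrun s t k)
  else {hrun m 1 k}
termination_by m - s
decreasing_by omega

lemma PF_lt {m s : ℕ} (k : ℕ) (h : s < m) :
    PF m s k = (Finset.Icc 1 k).biUnion fun t => (PF m (s+1) t).image (· ++ hrun s t k) := by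
  rw [PF, if_pos h]

lemma PF_ge {m s : ℕ} (k : ℕ) (h : ¬ s < m) : PF m s k = {hrun m 1 k} := by
  rw [PF, if_neg h]

lemma PF_coe (m n s k : ℕ) (h1 : 1 ≤ s) (h2 : s ≤ m) (h3 : 1 ≤ k) (h4 : k ≤ n) :
    (PF m s k : Set (List (ℕ × ℕ))) = {p | IsPath (m,1) (s,k) p ∧ InGrid m n p} := by
  rcases lt_or_ge s m with h | h
  · rw [PF_lt k h]
    ext p
    simp only [Finset.coe_biUnion, Finset.mem_Icc, Set.mem_iUnion, Finset.mem_coe,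
      Finset.mem_image, Set.mem_setOf_eq, Finset.mem_coe]
    constructor
    · rintro ⟨t, ht, q, hq, rfl⟩
      have hq' : q ∈ (PF m (s+1) t : Set (List (ℕ × ℕ))) := hq
      rw [PF_coe m n (s+1) t (by omega) (by omega) ht.1 (by omega)] at hq'
      exact path_extend h1 h ht.1 ht.2 h4 q hq'.1 hq'.2
    · rintro ⟨hp, hg⟩
      obtain ⟨t, q, ht1, ht2, hq, rfl⟩ := path_split h _ k hp hg
      refine ⟨t, ⟨ht1, ht2⟩, q, ?_, rfl⟩
      have hgq : InGrid m n q := fun c hc => hg c (List.mem_append_left _ hc)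
      have : q ∈ (PF m (s+1) t : Set (List (ℕ × ℕ))) := by
        rw [PF_coe m n (s+1) t (by omega) (by omega) ht1 (by omega)]
        exact ⟨hq, hgq⟩
      exact this
  · have hsm : s = m := by omega
    subst hsm
    rw [PF_ge k (by omega)]
    ext p
    simp only [Finset.coe_singleton, Set.mem_singleton_iff, Set.mem_setOf_eq]
    constructor
    · rintro rfl
      refine ⟨hrun_isPath h3, ?_⟩
      intro c hc
      obtain ⟨hc1, hc2, hc3⟩ := hrun_mem hc
      omega
    · rintro ⟨hp, hg⟩
      exact path_base p k hp hg
termination_by m - s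
decreasing_by all_goals omega

lemma prod_list_range' (g : ℕ → K) : ∀ (c a : ℕ),
    ((List.range' a c).map g).prod = ∏ j ∈ Finset.Ico a (a + c), g j
  | 0, a => by simp
  | (c+1), a => by
    have hb : a + (c+1) = (a+1) + c := by omega
    rw [List.range'_succ, List.map_cons, List.prod_cons, prod_list_range' g c (a+1), hb,
      Finset.prod_eq_prod_Ico_succ_bot (by omega : a < (a+1) + c) g]

lemma pathWeight_hrun (x y : ℕ → K) (s t k : ℕ) :
    pathWeight x y (hrun s t k) = Hrow y (x s) t k := by
  rw [pathWeight, hrun, List.map_map, prod_list_range']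
  rcases le_or_gt t (k+1) with h | h
  · rw [show t + (k + 1 - t) = k + 1 from by omega, Hrow, ← Finset.Ico_add_one_right_eq_Icc]
    rfl
  · rw [show k + 1 - t = 0 from by omega, Hrow_empty y (x s) (by omega : k < t)]
    simp

lemma pathWeight_append (x y : ℕ → K) (q r : List (ℕ × ℕ)) :
    pathWeight x y (q ++ r) = pathWeight x y q * pathWeight x y r := by
  rw [pathWeight, pathWeight, pathWeight, List.map_append, List.prod_append]

lemma countP_hrun (s t k : ℕ) :
    (hrun s t k).countP (fun c => c.1 = s) = k + 1 - t := by
  rw [hrun]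
  have : ∀ c ∈ (List.range' t (k+1-t)).map (fun j => (s, j)), (fun c : ℕ × ℕ => decide (c.1 = s)) c = true := by
    intro c hc
    simp only [List.mem_map] at hc
    obtain ⟨j, _, rfl⟩ := hc
    simp
  rw [List.countP_eq_length.2 this, List.length_map, List.length_range']

lemma sum_PF_eq_G (x y : ℕ → K) (m n s k : ℕ) (h1 : 1 ≤ s) (h2 : s ≤ m) (h3 : 1 ≤ k)
    (h4 : k ≤ n) : ∑ p ∈ PF m s k, pathWeight x y p = G x y m s k := by
  rcases lt_or_ge s m with h | h
  · rw [PF_lt k h, G_lt x y k h]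
    rw [Finset.sum_biUnion]
    · refine Finset.sum_congr rfl fun t ht => ?_
      simp only [Finset.mem_Icc] at ht
      rw [Finset.sum_image (by intro p _ q _ hpq; exact List.append_cancel_right hpq)]
      calc ∑ p ∈ PF m (s+1) t, pathWeight x y (p ++ hrun s t k)
          = ∑ p ∈ PF m (s+1) t, pathWeight x y p * Hrow y (x s) t k := by
            refine Finset.sum_congr rfl fun p _ => ?_
            rw [pathWeight_append, pathWeight_hrun]
        _ = Hrow y (x s) t k * ∑ p ∈ PF m (s+1) t, pathWeight x y p := by
            rw [← Finset.sum_mul]; ring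
        _ = Hrow y (x s) t k * G x y m (s+1) t := by
            rw [sum_PF_eq_G x y m n (s+1) t (by omega) (by omega) ht.1 (by omega)]
    · -- pairwise disjointness
      intro t ht t' ht' htt'
      simp only [Finset.coe_Icc, Set.mem_Icc] at ht ht'
      simp only [Function.onFun]
      rw [Finset.disjoint_left]
      intro r hr hr'
      simp only [Finset.mem_image] at hr hr'
      obtain ⟨q, hq, rfl⟩ := hr
      obtain ⟨q', hq', heq⟩ := hr'
      -- count cells in row s
      have hrow : ∀ (u : ℕ) (qq : List (ℕ × ℕ)), u ∈ Finset.Icc 1 k → qq ∈ PF m (s+1) u →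
          qq.countP (fun c => c.1 = s) = 0 := by
        intro u qq hu hqq
        simp only [Finset.mem_Icc] at hu
        have : qq ∈ (PF m (s+1) u : Set (List (ℕ × ℕ))) := hqq
        rw [PF_coe m n (s+1) u (by omega) (by omega) hu.1 (by omega)] at this
        rw [List.countP_eq_zero]
        intro c hc
        have := rows_ge_last qq (s+1, u) this.1.1 this.1.2.2 c hc
        simp only [decide_eq_true_eq]
        omega
      have hcount := congrArg (List.countP (fun c => c.1 = s)) heq
      rw [List.countP_append, List.countP_append, countP_hrun, countP_hrun,
        hrow t q (by simp only [Finset.mem_Icc]; omega) hq,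
        hrow t' q' (by simp only [Finset.mem_Icc]; omega) hq'] at hcount
      simp only [Finset.mem_Icc] at *
      omega
  · have hsm : s = m := by omega
    subst hsm
    rw [PF_ge k (by omega), G_ge x y k (by omega), Finset.sum_singleton, pathWeight_hrun]
termination_by m - s
decreasing_by all_goals omega

lemma F1_eq_G (x y : ℕ → K) (m n s k : ℕ) (h1 : 1 ≤ s) (h2 : s ≤ m) (h3 : 1 ≤ k)
    (h4 : k ≤ n) : F1 m n x y (m,1) (s,k) = G x y m s k := by
  have step1 : F1 m n x y (m,1) (s,k)
      = ∑ᶠ p ∈ {p | IsPath (m,1) (s,k) p ∧ InGrid m n p}, pathWeight x y p :=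
    finsum_set_coe_eq_finsum_mem _
  rw [step1, ← PF_coe m n s k h1 h2 h3 h4, finsum_mem_coe_finset,
    sum_PF_eq_G x y m n s k h1 h2 h3 h4]

lemma algebraMap_K_injective :
    Function.Injective (algebraMap (MvPolynomial (ℕ ⊕ ℕ) ℚ) K) :=
  IsFractionRing.injective (MvPolynomial (ℕ ⊕ ℕ) ℚ) K

lemma XY_ne (i j : ℕ) : X i + Y j ≠ 0 := by
  rw [X, Y, ← map_add]
  intro hc
  have h0 : (MvPolynomial.X (Sum.inl i) + MvPolynomial.X (Sum.inr j) : MvPolynomial (ℕ ⊕ ℕ) ℚ) = 0 := by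
    apply algebraMap_K_injective
    rw [hc, map_zero]
  have := congrArg (MvPolynomial.eval (fun _ => (1 : ℚ))) h0
  simp at this

lemma X_ne {i j : ℕ} (hij : i ≠ j) : X i ≠ X j := by
  rw [X, X]
  intro hc
  have h0 := algebraMap_K_injective hc
  have := congrArg (MvPolynomial.eval
    (fun c => if c = Sum.inl i then (0 : ℚ) else 1)) h0
  simp only [MvPolynomial.eval_X, if_true,
    if_neg (show ¬(Sum.inl j = (Sum.inl i : ℕ ⊕ ℕ)) by simp [Ne.symm hij])] at this
  exact absurd this (by norm_num)


/-- The weighted sum `F_{s,k}` over Up-Right lattice paths from `(m,1)` to `(s,k)` in the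
grid `{1,…,m} × {1,…,n}` is a symmetric function of the variables `x_s, x_{s+1}, …, x_m`:
it is unchanged under any permutation of the variable indices fixing everything outside
`{s,…,m}`. -/
theorem stmt8 (m n s k : ℕ) (hs : 1 ≤ s) (hsm : s ≤ m) (hk : 1 ≤ k) (hkn : k ≤ n)
    (σ : Equiv.Perm ℕ) (hσ : ∀ i, i ∉ Finset.Icc s m → σ i = i) :
    F1 m n (fun i => X (σ i)) Y (m, 1) (s, k) = F1 m n X Y (m, 1) (s, k) := by
  rw [F1_eq_G (fun i => X (σ i)) Y m n s k hs hsm hk hkn,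
    F1_eq_G X Y m n s k hs hsm hk hkn]
  exact G_perm_inv m s k σ (mem_closure_of_supp s m hsm σ hσ) X Y
    (fun i j => XY_ne i j) (fun i j hij => X_ne hij)
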